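/- For all integers N ≥ 1 and n ≥ 1, B_{N,n} = (−1)^n · n! · det(A), where A is the n×n matrix with entries A_{i,j} = N!/(N+i−j+1)! for 1 ≤ j ≤ i ≤ n, A_{i,i+1} = 1 for 1 ≤ i ≤ n−1, and A_{i,j} = 0 for j > i+1. -/

import Mathlib

open Finset

/-- The power series ∑_{i≥0} (N!/(N+i)!) xⁱ over ℚ. -/
noncomputable def hgSeries (N : ℕ) : PowerSeries ℚ :=
  PowerSeries.mk fun i => (N.factorial : ℚ) / ((N + i).factorial : ℚ)

/-- The hypergeometric Bernoulli number `B_{N,n}`, defined so that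
`∑ (B_{N,n}/n!) xⁿ` is the multiplicative inverse of `hgSeries N` in ℚ[[x]]. -/
noncomputable def hB (N n : ℕ) : ℚ :=
  (n.factorial : ℚ) * PowerSeries.coeff (R := ℚ) n (hgSeries N)⁻¹

namespace HGBaux

/-- The Hessenberg matrix built from a sequence `a`. -/
def M (a : ℕ → ℚ) (n : ℕ) : Matrix (Fin n) (Fin n) ℚ :=
  Matrix.of fun i j =>
    if (j : ℕ) = (i : ℕ) + 1 then 1
    else if (j : ℕ) ≤ (i : ℕ) then a ((i : ℕ) - (j : ℕ) + 1) else 0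

/-- Variant where the first column is an arbitrary vector `v`. -/
def G (a v : ℕ → ℚ) (n : ℕ) : Matrix (Fin n) (Fin n) ℚ :=
  Matrix.of fun i j =>
    if (j : ℕ) = 0 then v (i : ℕ)
    else if (j : ℕ) = (i : ℕ) + 1 then 1
    else if (j : ℕ) ≤ (i : ℕ) then a ((i : ℕ) - (j : ℕ) + 1) else 0

lemma G_shift_eq_M (a : ℕ → ℚ) (n : ℕ) : G a (fun i => a (i + 1)) n = M a n := by
  ext i j
  simp only [G, M, Matrix.of_apply]
  by_cases hj : (j : ℕ) = 0
  · simp [hj]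
  · simp [hj]

lemma det_G (a : ℕ → ℚ) : ∀ (n : ℕ) (v : ℕ → ℚ),
    (G a v (n + 1)).det =
      ∑ i : Fin (n + 1), (-1 : ℚ) ^ (i : ℕ) * v i * (M a (n - (i : ℕ))).det := by
  intro n
  induction n with
  | zero =>
    intro v
    simp [G, M, Matrix.det_fin_one]
  | succ n ih =>
    intro v
    have hsub0 : (G a v (n + 1 + 1)).submatrix Fin.succ ((0 : Fin (n + 1 + 1)).succAbove)
        = M a (n + 1) := by
      ext i j
      simp only [Matrix.submatrix_apply, Fin.succAbove_zero, G, M, Matrix.of_apply,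
        Fin.val_succ]
      have h1 : (i : ℕ) + 1 - ((j : ℕ) + 1) = (i : ℕ) - (j : ℕ) := by omega
      by_cases h : (j : ℕ) = (i : ℕ) + 1
      · simp [h]
      · by_cases h2 : (j : ℕ) ≤ (i : ℕ) <;> simp [h, h2, h1] <;> omega
    have hsub1 : (G a v (n + 1 + 1)).submatrix Fin.succ ((1 : Fin (n + 1 + 1)).succAbove)
        = G a (fun i => v (i + 1)) (n + 1) := by
      ext i j
      have hc : (((1 : Fin (n + 2)).succAbove j : Fin (n + 2)) : ℕ)
          = if (j : ℕ) = 0 then 0 else (j : ℕ) + 1 := by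
        by_cases hj : (j : ℕ) = 0
        · rw [Fin.succAbove_of_castSucc_lt, if_pos hj]
          · simp [hj]
          · rw [Fin.lt_def]
            simp [hj]
        · rw [Fin.succAbove_of_le_castSucc, if_neg hj]
          · simp
          · rw [Fin.le_def]
            simp only [Fin.val_one, Fin.coe_castSucc]
            omega
      simp only [Matrix.submatrix_apply, G, Matrix.of_apply, Fin.val_succ, hc]
      by_cases hj : (j : ℕ) = 0
      · simp [hj]
      · have h1 : (i : ℕ) + 1 - ((j : ℕ) + 1) = (i : ℕ) - (j : ℕ) := by omega
        by_cases h : (j : ℕ) = (i : ℕ) + 1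
        · simp [hj, h]
        · by_cases h2 : (j : ℕ) ≤ (i : ℕ) <;> simp [hj, h, h2, h1] <;> omega
    have hG0 : G a v (n + 1 + 1) 0 0 = v 0 := by simp [G]
    have hG1 : G a v (n + 1 + 1) 0 1 = 1 := by simp [G]
    have hGrest : ∀ j : Fin n, G a v (n + 1 + 1) 0 j.succ.succ = 0 := by
      intro j
      simp only [G, Matrix.of_apply, Fin.val_succ]
      norm_num
    rw [Matrix.det_succ_row_zero, Fin.sum_univ_succ, Fin.sum_univ_succ]
    simp only [Fin.succ_zero_eq_one, hG0, hG1, hGrest, hsub0, hsub1, mul_zero, zero_mul,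
      Finset.sum_const_zero, add_zero, Fin.val_zero, pow_zero, one_mul, Fin.val_one, pow_one]
    rw [ih]
    conv_rhs => rw [Fin.sum_univ_succ]
    simp only [Fin.val_zero, pow_zero, one_mul, Nat.sub_zero, Fin.val_succ]
    rw [Finset.sum_congr rfl (fun (i : Fin (n + 1)) _ =>
      show (-1 : ℚ) ^ ((i : ℕ) + 1) * v ((i : ℕ) + 1) * (M a (n + 1 - ((i : ℕ) + 1))).det
          = -((-1 : ℚ) ^ (i : ℕ) * v ((i : ℕ) + 1) * (M a (n - (i : ℕ))).det) from by
        rw [show n + 1 - ((i : ℕ) + 1) = n - (i : ℕ) from by omega]; ring)]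
    rw [Finset.sum_neg_distrib]
    ring_nf
    rfl

lemma det_M_succ (a : ℕ → ℚ) (n : ℕ) :
    (M a (n + 1)).det =
      ∑ i : Fin (n + 1), (-1 : ℚ) ^ (i : ℕ) * a ((i : ℕ) + 1) * (M a (n - (i : ℕ))).det := by
  rw [← G_shift_eq_M, det_G]

def aa (N i : ℕ) : ℚ := (N.factorial : ℚ) / ((N + i).factorial : ℚ)

lemma coeff_hg (N i : ℕ) : PowerSeries.coeff (R := ℚ) i (hgSeries N) = aa N i :=
  PowerSeries.coeff_mk _ _

lemma constCoeff_hg (N : ℕ) : PowerSeries.constantCoeff (R := ℚ) (hgSeries N) = 1 := by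
  rw [← PowerSeries.coeff_zero_eq_constantCoeff, coeff_hg, aa, Nat.add_zero,
    div_self (Nat.cast_ne_zero.mpr N.factorial_ne_zero)]

lemma coeff_inv_eq (N : ℕ) : ∀ n : ℕ,
    PowerSeries.coeff (R := ℚ) n (hgSeries N)⁻¹ = (-1 : ℚ) ^ n * (M (aa N) n).det := by
  intro n
  induction n using Nat.strong_induction_on with
  | _ n ih =>
    cases n with
    | zero =>
      rw [PowerSeries.coeff_inv, if_pos rfl, constCoeff_hg]
      have : (M (aa N) 0).det = 1 := Matrix.det_fin_zero
      rw [this]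
      norm_num
    | succ n =>
      rw [PowerSeries.coeff_inv, if_neg (Nat.succ_ne_zero n), constCoeff_hg, inv_one,
        Finset.Nat.sum_antidiagonal_eq_sum_range_succ_mk, Finset.sum_range_succ']
      have hf0 : (if (n + 1) - 0 < n + 1 then
          PowerSeries.coeff (R := ℚ) 0 (hgSeries N) * PowerSeries.coeff (R := ℚ) ((n + 1) - 0) (hgSeries N)⁻¹
          else 0) = 0 := by
        rw [if_neg]
        omega
      rw [hf0, add_zero]
      have hterm : ∀ i ∈ Finset.range (n + 1),
          (if (n + 1) - (i + 1) < n + 1 then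
            PowerSeries.coeff (R := ℚ) (i + 1) (hgSeries N) *
              PowerSeries.coeff (R := ℚ) ((n + 1) - (i + 1)) (hgSeries N)⁻¹ else 0)
          = aa N (i + 1) * ((-1 : ℚ) ^ (n - i) * (M (aa N) (n - i)).det) := by
        intro i hi
        rw [if_pos (by omega), show (n + 1) - (i + 1) = n - i from by omega, coeff_hg,
          ih (n - i) (by omega)]
      rw [Finset.sum_congr rfl hterm, det_M_succ, Fin.sum_univ_eq_sum_range
        (fun i => (-1 : ℚ) ^ i * aa N (i + 1) * (M (aa N) (n - i)).det), Finset.mul_sum,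
        Finset.mul_sum]
      refine Finset.sum_congr rfl fun i hi => ?_
      have hi' : i ≤ n := by simpa [Nat.lt_succ_iff] using hi
      have hpow : ((-1 : ℚ) ^ (n + 1)) * (-1 : ℚ) ^ i = -(-1 : ℚ) ^ (n - i) := by
        have h2 : n + 1 + i = (n - i) + (2 * i + 1) := by omega
        calc ((-1 : ℚ) ^ (n + 1)) * (-1 : ℚ) ^ i = (-1 : ℚ) ^ (n + 1 + i) := (pow_add _ _ _).symm
          _ = (-1 : ℚ) ^ ((n - i) + (2 * i + 1)) := by rw [h2]
          _ = (-1 : ℚ) ^ (n - i) * ((-1 : ℚ) ^ (2 * i) * (-1)) := by rw [pow_add, pow_succ]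
          _ = -(-1 : ℚ) ^ (n - i) := by
              rw [pow_mul]
              norm_num
      calc -1 * (aa N (i + 1) * ((-1 : ℚ) ^ (n - i) * (M (aa N) (n - i)).det))
          = (((-1 : ℚ) ^ (n + 1)) * (-1 : ℚ) ^ i) * aa N (i + 1) * (M (aa N) (n - i)).det := by
            rw [hpow]; ring
        _ = (-1 : ℚ) ^ (n + 1) * ((-1 : ℚ) ^ i * aa N (i + 1) * (M (aa N) (n - i)).det) := by
            ring

end HGBaux



theorem stmt7 (N n : ℕ) (hN : 1 ≤ N) (hn : 1 ≤ n) :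
    hB N n = (-1 : ℚ) ^ n * (n.factorial : ℚ) *
      (Matrix.of fun i j : Fin n =>
        if (j : ℕ) = (i : ℕ) + 1 then (1 : ℚ)
        else if (j : ℕ) ≤ (i : ℕ) then
          (N.factorial : ℚ) / ((N + ((i : ℕ) - (j : ℕ)) + 1).factorial : ℚ)
        else 0).det := by
  have hM : (Matrix.of fun i j : Fin n =>
      if (j : ℕ) = (i : ℕ) + 1 then (1 : ℚ)
      else if (j : ℕ) ≤ (i : ℕ) then
        (N.factorial : ℚ) / ((N + ((i : ℕ) - (j : ℕ)) + 1).factorial : ℚ)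
      else 0) = HGBaux.M (HGBaux.aa N) n := by
    ext i j
    simp only [HGBaux.M, HGBaux.aa, Matrix.of_apply]
    by_cases h : (j : ℕ) = (i : ℕ) + 1
    · simp [h]
    · by_cases h2 : (j : ℕ) ≤ (i : ℕ)
      · simp only [h, h2, if_false, if_true]
        rw [show N + ((i : ℕ) - (j : ℕ)) + 1 = N + ((i : ℕ) - (j : ℕ) + 1) from by omega]
      · simp [h, h2]
  rw [hB, HGBaux.coeff_inv_eq, hM]
  ring
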